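/- For every n ≥ 3 with 3 ∣ n, there exists a 2-AND-OR-BN on n nodes that is observable with an observation set of size n/3. -/
import Mathlib


/-- `F` is observable with observation set `S` if the map from an initial state to its
output sequence (the restriction of each iterate to `S`) is injective. -/
def observable {n : ℕ} (F : (Fin n → Bool) → (Fin n → Bool)) (S : Finset (Fin n)) : Prop :=
  Function.Injective (fun (x : Fin n → Bool) => fun (t : ℕ) (i : S) => (F^[t] x) i.val)

/-- `F` is a `K`-AND-OR-BN: each local function is the AND or the OR of `K` literals
on pairwise distinct variables (a literal is `x_{i_j} XOR b_j`). -/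
def isAndOrBN {n : ℕ} (K : ℕ) (F : (Fin n → Bool) → (Fin n → Bool)) : Prop :=
  ∀ i : Fin n, ∃ idx : Fin K → Fin n, Function.Injective idx ∧ ∃ b : Fin K → Bool,
    (∀ x, F x i = Finset.univ.inf (fun j => Bool.xor (x (idx j)) (b j))) ∨
    (∀ x, F x i = Finset.univ.sup (fun j => Bool.xor (x (idx j)) (b j)))

/-- local update rule on a triple -/
def Gloc (y : Fin 3 → Bool) : Fin 3 → Bool :=
  ![y 1 && y 2, !y 1 && y 2, y 1 || y 2]

lemma Gloc_obs_inj : ∀ y y' : Fin 3 → Bool,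
    (∀ t < 8, (Gloc^[t] y) 0 = (Gloc^[t] y') 0) → y = y' := by decide

lemma inf_fin2 : ∀ g : Fin 2 → Bool, Finset.univ.inf g = (g 0 && g 1) := by decide
lemma sup_fin2 : ∀ g : Fin 2 → Bool, Finset.univ.sup g = (g 0 || g 1) := by decide

section

variable {m n : ℕ} (e : Fin 3 × Fin m ≃ Fin n)

/-- the global BN: each triple evolves by `Gloc` independently -/
def Fbn (x : Fin n → Bool) (i : Fin n) : Bool :=
  Gloc (fun q => x (e (q, (e.symm i).2))) (e.symm i).1

lemma Fbn_iter (t : ℕ) (x : Fin n → Bool) (p : Fin 3) (k : Fin m) :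
    (Fbn e)^[t] x (e (p, k)) = Gloc^[t] (fun q => x (e (q, k))) p := by
  induction t generalizing x with
  | zero => simp
  | succ t ih =>
      rw [Function.iterate_succ_apply, Function.iterate_succ_apply, ih]
      have hq : (fun q => Fbn e x (e (q, k))) = Gloc (fun q => x (e (q, k))) := by
        funext q
        simp [Fbn]
      rw [hq]

end

theorem best_case_two_and_or (n : ℕ) (hn : 3 ≤ n) (hdvd : 3 ∣ n) :
    ∃ (F : (Fin n → Bool) → (Fin n → Bool)) (S : Finset (Fin n)),
      isAndOrBN 2 F ∧ S.card = n / 3 ∧ observable F S := by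
  obtain ⟨m, hm⟩ := hdvd
  let e : Fin 3 × Fin m ≃ Fin n := finProdFinEquiv.trans (finCongr hm.symm)
  refine ⟨Fbn e, Finset.univ.image (fun k : Fin m => e (0, k)), ?_, ?_, ?_⟩
  · -- isAndOrBN
    intro i
    obtain ⟨p, k, hpk⟩ : ∃ p k, e.symm i = (p, k) := ⟨_, _, rfl⟩
    have hFx : ∀ x : Fin n → Bool, Fbn e x i =
        Gloc (fun q => x (e (q, k))) p := by
      intro x
      simp [Fbn, hpk]
    refine ⟨![e (1, k), e (2, k)], ?_, ?_⟩
    · intro a b hab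
      fin_cases a <;> fin_cases b <;> simp_all <;>
        exact absurd (e.injective hab) (by simp [Prod.ext_iff])
    · fin_cases p
      · refine ⟨![false, false], Or.inl fun x => ?_⟩
        rw [hFx, inf_fin2]
        simp [Gloc]
      · refine ⟨![true, false], Or.inl fun x => ?_⟩
        rw [hFx, inf_fin2]
        simp [Gloc]
      · refine ⟨![false, false], Or.inr fun x => ?_⟩
        rw [hFx, sup_fin2]
        simp [Gloc]
  · -- cardinality
    rw [Finset.card_image_of_injective _ (fun a b hab => by
      simpa using (Prod.ext_iff.1 (e.injective hab)).2), Finset.card_univ,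
      Fintype.card_fin, hm, Nat.mul_div_cancel_left m (by norm_num)]
  · -- observability
    intro x x' h
    simp only at h
    have hobs : ∀ k : Fin m, ∀ t : ℕ,
        (Fbn e)^[t] x (e (0, k)) = (Fbn e)^[t] x' (e (0, k)) := by
      intro k t
      have := congrFun (congrFun h t) ⟨e (0, k), Finset.mem_image_of_mem _ (Finset.mem_univ k)⟩
      exact this
    funext i
    have : (fun q => x (e (q, (e.symm i).2))) = (fun q => x' (e (q, (e.symm i).2))) := by
      apply Gloc_obs_inj
      intro t _
      rw [← Fbn_iter e t x, ← Fbn_iter e t x']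
      exact hobs _ t
    have h2 := congrFun this (e.symm i).1
    simpa using h2
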